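/- Real Schur form of real circulant matrices: for any real circulant matrix C of order n = 2m+1, with U the orthogonal matrix built from the real and imaginary parts of the columns of F*, the matrix U^T C U is block structured: it is the direct sum (after permutation) of the 1×1 block [α_0] and 2×2 blocks [[α_k, β_k],[-β_k, α_k]] for k = 1,…,m, where λ_k = α_k + iβ_k are the eigenvalues of C. -/

import Mathlib

open Matrix Complex Finset


namespace RSFaux

noncomputable def ee (n : ℕ) (k : ℤ) : ℂ := Complex.exp (2 * Real.pi * Complex.I * k / n)

lemma ee_add (n : ℕ) (k l : ℤ) : ee n (k + l) = ee n k * ee n l := by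
  rw [ee, ee, ee, ← Complex.exp_add]; congr 1; push_cast; ring

lemma ee_conj (n : ℕ) (k : ℤ) : (starRingEnd ℂ) (ee n k) = ee n (-k) := by
  rw [ee, ee, ← Complex.exp_conj]; congr 1
  simp [map_div₀, map_ofNat]

lemma ee_dvd (n : ℕ) (hn : 0 < n) {k : ℤ} (h : (n:ℤ) ∣ k) : ee n k = 1 := by
  obtain ⟨t, rfl⟩ := h
  have hne : (n:ℂ) ≠ 0 := Nat.cast_ne_zero.2 hn.ne'
  rw [ee, show (2 * (Real.pi:ℂ) * Complex.I * (((n:ℤ) * t : ℤ):ℂ) / (n:ℂ)) = (t:ℂ) * (2*(Real.pi:ℂ)*Complex.I) by push_cast; field_simp]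
  exact Complex.exp_int_mul_two_pi_mul_I t

lemma ee_eq_one_iff (n : ℕ) (hn : 0 < n) (k : ℤ) : ee n k = 1 ↔ (n:ℤ) ∣ k := by
  constructor
  · intro h
    rw [ee, Complex.exp_eq_one_iff] at h
    obtain ⟨t, ht⟩ := h
    have hπ : (2*(Real.pi:ℂ)*Complex.I) ≠ 0 := by
      simp [Real.pi_ne_zero, Complex.I_ne_zero, Complex.ofReal_ne_zero]
    have hne : (n:ℂ) ≠ 0 := Nat.cast_ne_zero.2 hn.ne'
    refine ⟨t, ?_⟩
    have hC : (k:ℂ) = (n:ℂ) * t := by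
      field_simp at ht
      apply mul_left_cancel₀ hπ
      linear_combination (2*(Real.pi:ℂ)*Complex.I) * ht
    exact_mod_cast hC
  · exact ee_dvd n hn

lemma ee_pow (n : ℕ) (k : ℤ) (a : ℕ) : ee n (k * a) = ee n k ^ a := by
  rw [ee, ee, ← Complex.exp_nat_mul]; congr 1; push_cast; ring

lemma ee_congr (n : ℕ) (hn : 0 < n) {k l : ℤ} (h : (n:ℤ) ∣ (k - l)) : ee n k = ee n l := by
  have hkl : k = l + (k - l) := by ring
  rw [hkl, ee_add, ee_dvd n hn h, mul_one]

noncomputable def sig (m : ℕ) (k : ℤ) : ℂ := if ((2*m+1:ℕ):ℤ) ∣ k then ((2*m+1:ℕ):ℂ) else 0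

lemma sig_zero (m : ℕ) : sig m 0 = ((2*m+1:ℕ):ℂ) := by simp [sig]

lemma sig_eq_zero (m : ℕ) (k : ℤ) (h1 : k ≠ 0) (h2 : |k| < ((2*m+1:ℕ):ℤ)) : sig m k = 0 := by
  rw [sig, if_neg]
  intro hd
  exact h1 (Int.eq_zero_of_abs_lt_dvd hd h2)

lemma sum_ee (m : ℕ) (k : ℤ) :
    ∑ p : Fin (2*m+1), ee (2*m+1) (k * p.1) = sig m k := by
  have hn : 0 < 2*m+1 := Nat.succ_pos _
  simp_rw [ee_pow]
  rw [Fin.sum_univ_eq_sum_range (fun i => ee (2*m+1) k ^ i)]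
  rw [sig]
  by_cases h : ((2*m+1:ℕ):ℤ) ∣ k
  · rw [if_pos h, (ee_eq_one_iff _ hn k).2 h]; simp
  · rw [if_neg h]
    have h1 : ee (2*m+1) k ≠ 1 := fun hh => h ((ee_eq_one_iff _ hn k).1 hh)
    rw [geom_sum_eq h1]
    have h2 : ee (2*m+1) k ^ (2*m+1) = 1 := by
      rw [← ee_pow]; exact ee_dvd _ hn ⟨k, by push_cast; ring⟩
    rw [h2]; simp

lemma fin_sub_mod (m : ℕ) (p r : Fin (2*m+1)) :
    ((2*m+1 : ℕ):ℤ) ∣ (((p - r).1 : ℤ) - ((p.1:ℤ) - (r.1:ℤ))) := by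
  have h1 : (p - r).1 = (((2*m+1) - r.1) + p.1) % (2*m+1) := by
    rw [Fin.sub_def]
  have hr : r.1 < 2*m+1 := r.2
  have h2 := Nat.div_add_mod (((2*m+1) - r.1) + p.1) (2*m+1)
  refine ⟨1 - (((((2*m+1) - r.1) + p.1)/(2*m+1) : ℕ) : ℤ), ?_⟩
  rw [h1]
  generalize hq : (((2*m+1) - r.1) + p.1)/(2*m+1) = q at h2 ⊢
  generalize ht : (((2*m+1) - r.1) + p.1) % (2*m+1) = t at h2 ⊢
  zify [hr.le] at h2
  push_cast
  linear_combination h2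

noncomputable def lamZ (m : ℕ) (c : Fin (2*m+1) → ℝ) (b : ℤ) : ℂ :=
  ∑ r : Fin (2*m+1), (c r : ℂ) * ee (2*m+1) (-(b * r.1))

lemma lamZ_conj (m : ℕ) (c : Fin (2*m+1) → ℝ) (b : ℤ) :
    (starRingEnd ℂ) (lamZ m c b) = lamZ m c (-b) := by
  rw [lamZ, lamZ, map_sum]
  refine Finset.sum_congr rfl fun r _ => ?_
  rw [_root_.map_mul, Complex.conj_ofReal, ee_conj]
  congr 2
  ring

lemma key (m : ℕ) (c : Fin (2*m+1) → ℝ) (a b : ℤ) :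
    ∑ p : Fin (2*m+1), ∑ q : Fin (2*m+1),
      ee (2*m+1) (a * p.1) * (c (p - q) : ℂ) * ee (2*m+1) (b * q.1)
    = lamZ m c b * sig m (a + b) := by
  have hn : 0 < 2*m+1 := Nat.succ_pos _
  have hinner : ∀ p : Fin (2*m+1),
      ∑ q : Fin (2*m+1), ee (2*m+1) (a*p.1) * (c (p - q):ℂ) * ee (2*m+1) (b*q.1)
      = ee (2*m+1) ((a+b)*p.1) * lamZ m c b := by
    intro p
    rw [← Equiv.sum_comp (Equiv.subLeft p)
      (fun q => ee (2*m+1) (a*p.1) * (c (p - q):ℂ) * ee (2*m+1) (b*q.1))]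
    have hterm : ∀ r : Fin (2*m+1),
        ee (2*m+1) (a*(p.1:ℤ)) * (c (p - (Equiv.subLeft p r)):ℂ)
          * ee (2*m+1) (b*(((Equiv.subLeft p r).1 : ℕ):ℤ))
        = ee (2*m+1) ((a+b)*p.1) * ((c r : ℂ) * ee (2*m+1) (-(b*r.1))) := by
      intro r
      have hsl : Equiv.subLeft p r = p - r := rfl
      rw [hsl, sub_sub_cancel]
      have hcon : ee (2*m+1) (b*(((p - r).1:ℕ):ℤ)) = ee (2*m+1) (b*p.1 + -(b*r.1)) := by
        apply ee_congr _ hn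
        obtain ⟨t, ht⟩ := fin_sub_mod m p r
        exact ⟨b*t, by linear_combination b * ht⟩
      rw [hcon, ee_add, show (a+b)*(p.1:ℤ) = a*p.1 + b*p.1 by ring, ee_add]
      ring
    rw [Finset.sum_congr rfl fun r _ => hterm r, ← Finset.mul_sum]
    rfl
  rw [Finset.sum_congr rfl fun p _ => hinner p, ← Finset.sum_mul, sum_ee, mul_comm]

lemma cos_cast (m a b : ℕ) :
    ((Real.cos (2*Real.pi*(a:ℝ)*(b:ℝ)/((2*m+1:ℕ):ℝ))):ℂ)
    = (ee (2*m+1) ((b:ℤ)*(a:ℤ)) + ee (2*m+1) (-((b:ℤ)*(a:ℤ))))/2 := by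
  rw [Complex.ofReal_cos]
  rw [show Complex.cos ((2*Real.pi*(a:ℝ)*(b:ℝ)/((2*m+1:ℕ):ℝ) : ℝ) : ℂ)
      = (Complex.exp (((2*Real.pi*(a:ℝ)*(b:ℝ)/((2*m+1:ℕ):ℝ) : ℝ) : ℂ) * Complex.I)
        + Complex.exp (-(((2*Real.pi*(a:ℝ)*(b:ℝ)/((2*m+1:ℕ):ℝ) : ℝ) : ℂ)) * Complex.I))/2
    from rfl]
  rw [ee, ee]
  congr 3 <;> push_cast <;> ring

lemma sin_cast (m a b : ℕ) :
    ((Real.sin (2*Real.pi*(a:ℝ)*(b:ℝ)/((2*m+1:ℕ):ℝ))):ℂ)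
    = (ee (2*m+1) ((b:ℤ)*(a:ℤ)) - ee (2*m+1) (-((b:ℤ)*(a:ℤ))))/(2*Complex.I) := by
  rw [Complex.ofReal_sin]
  rw [show Complex.sin ((2*Real.pi*(a:ℝ)*(b:ℝ)/((2*m+1:ℕ):ℝ) : ℝ) : ℂ)
      = (Complex.exp (-(((2*Real.pi*(a:ℝ)*(b:ℝ)/((2*m+1:ℕ):ℝ) : ℝ) : ℂ)) * Complex.I)
        - Complex.exp (((2*Real.pi*(a:ℝ)*(b:ℝ)/((2*m+1:ℕ):ℝ) : ℝ) : ℂ) * Complex.I)) * Complex.I / 2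
    from rfl]
  have h1 : Complex.exp (((2*Real.pi*(a:ℝ)*(b:ℝ)/((2*m+1:ℕ):ℝ) : ℝ) : ℂ) * Complex.I)
      = ee (2*m+1) ((b:ℤ)*(a:ℤ)) := by
    rw [ee]; congr 1; push_cast; ring
  have h2 : Complex.exp (-(((2*Real.pi*(a:ℝ)*(b:ℝ)/((2*m+1:ℕ):ℝ) : ℝ) : ℂ)) * Complex.I)
      = ee (2*m+1) (-((b:ℤ)*(a:ℤ))) := by
    rw [ee]; congr 1; push_cast; ring
  rw [h1, h2]
  have hI := Complex.I_sq
  field_simp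
  linear_combination (ee (2*m+1) (-((b:ℤ)*(a:ℤ))) - ee (2*m+1) ((b:ℤ)*(a:ℤ))) * hI

lemma carrier (m : ℕ) (c : Fin (2*m+1) → ℝ) (A B A' B' : ℂ) (a b : ℤ)
    (v v' : Fin (2*m+1) → ℝ)
    (hw : ∀ p : Fin (2*m+1), ((v p : ℝ):ℂ) = A * ee (2*m+1) (a*(p.1:ℤ)) + B * ee (2*m+1) ((-a)*(p.1:ℤ)))
    (hw' : ∀ q : Fin (2*m+1), ((v' q : ℝ):ℂ) = A' * ee (2*m+1) (b*(q.1:ℤ)) + B' * ee (2*m+1) ((-b)*(q.1:ℤ))) :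
    ((∑ q : Fin (2*m+1), (∑ p : Fin (2*m+1), v p * c (p - q)) * v' q : ℝ) : ℂ)
    = A*A' * (lamZ m c b * sig m (a+b)) + A*B' * (lamZ m c (-b) * sig m (a+(-b)))
    + B*A' * (lamZ m c b * sig m ((-a)+b)) + B*B' * (lamZ m c (-b) * sig m ((-a)+(-b))) := by
  push_cast
  have h1 : ∑ q : Fin (2*m+1), (∑ p : Fin (2*m+1), ((v p : ℂ)) * ((c (p - q) : ℝ):ℂ)) * ((v' q : ℝ):ℂ)
      = ∑ p : Fin (2*m+1), ∑ q : Fin (2*m+1), ((v p : ℝ):ℂ) * ((c (p - q) : ℝ):ℂ) * ((v' q : ℝ):ℂ) := by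
    rw [Finset.sum_comm]
    exact Finset.sum_congr rfl fun q _ => Finset.sum_mul _ _ _
  rw [h1]
  have h2 : ∀ p q : Fin (2*m+1), ((v p : ℝ):ℂ) * ((c (p - q) : ℝ):ℂ) * ((v' q : ℝ):ℂ)
      = A*A' * (ee (2*m+1) (a*(p.1:ℤ)) * ((c (p-q):ℝ):ℂ) * ee (2*m+1) (b*(q.1:ℤ)))
      + A*B' * (ee (2*m+1) (a*(p.1:ℤ)) * ((c (p-q):ℝ):ℂ) * ee (2*m+1) ((-b)*(q.1:ℤ)))
      + B*A' * (ee (2*m+1) ((-a)*(p.1:ℤ)) * ((c (p-q):ℝ):ℂ) * ee (2*m+1) (b*(q.1:ℤ)))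
      + B*B' * (ee (2*m+1) ((-a)*(p.1:ℤ)) * ((c (p-q):ℝ):ℂ) * ee (2*m+1) ((-b)*(q.1:ℤ))) := by
    intro p q; rw [hw, hw']; ring
  simp_rw [h2, Finset.sum_add_distrib, ← Finset.mul_sum]
  rw [key m c a b, key m c a (-b), key m c (-a) b, key m c (-a) (-b)]

lemma hwcos (m i0 : ℕ) (p : Fin (2*m+1)) :
    (((if i0 = 0 then (1:ℝ) else Real.sqrt 2) *
        (Real.cos (2*Real.pi*(p.1:ℝ)*(i0:ℝ)/((2*m+1:ℕ):ℝ)) / Real.sqrt ((2*m+1:ℕ):ℝ)) : ℝ) : ℂ)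
    = (((if i0 = 0 then (1:ℝ) else Real.sqrt 2) : ℝ):ℂ)/(2*((Real.sqrt ((2*m+1:ℕ):ℝ) : ℝ):ℂ))
        * ee (2*m+1) ((i0:ℤ)*(p.1:ℤ))
    + (((if i0 = 0 then (1:ℝ) else Real.sqrt 2) : ℝ):ℂ)/(2*((Real.sqrt ((2*m+1:ℕ):ℝ) : ℝ):ℂ))
        * ee (2*m+1) ((-(i0:ℤ))*(p.1:ℤ)) := by
  simp only [Complex.ofReal_mul, Complex.ofReal_div]
  rw [cos_cast m p.1 i0]
  simp only [neg_mul]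
  ring

lemma hwsin (m k0 : ℕ) (q : Fin (2*m+1)) :
    ((Real.sqrt 2 *
        (Real.sin (2*Real.pi*(q.1:ℝ)*(k0:ℝ)/((2*m+1:ℕ):ℝ)) / Real.sqrt ((2*m+1:ℕ):ℝ)) : ℝ) : ℂ)
    = ((Real.sqrt 2 : ℝ):ℂ) * (-Complex.I)/(2*((Real.sqrt ((2*m+1:ℕ):ℝ) : ℝ):ℂ))
        * ee (2*m+1) ((k0:ℤ)*(q.1:ℤ))
    + ((Real.sqrt 2 : ℝ):ℂ) * Complex.I/(2*((Real.sqrt ((2*m+1:ℕ):ℝ) : ℝ):ℂ))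
        * ee (2*m+1) ((-(k0:ℤ))*(q.1:ℤ)) := by
  simp only [Complex.ofReal_mul, Complex.ofReal_div]
  rw [sin_cast m q.1 k0]
  simp only [neg_mul]
  have hI := Complex.I_sq
  have hdiv : ∀ z : ℂ, z/(2*Complex.I) = z * (-Complex.I)/2 := by
    intro z
    rw [div_eq_div_iff (by simp [Complex.I_ne_zero] : (2*Complex.I) ≠ 0) (two_ne_zero)]
    linear_combination (2*z) * Complex.I_sq
  rw [hdiv]
  ring

lemma lam_eq (m : ℕ) (c : Fin (2*m+1) → ℝ) (k : ℕ) :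
    (∑ j : Fin (2*m+1), (c j : ℂ) *
      Complex.exp (-(2 * (Real.pi:ℂ) * Complex.I * (k:ℂ) * ((j.1:ℕ):ℂ) / ((2*m+1:ℕ):ℂ))))
    = lamZ m c (k:ℤ) := by
  rw [lamZ]
  refine Finset.sum_congr rfl fun j _ => ?_
  congr 1
  rw [ee]
  congr 1
  push_cast
  ring

lemma re_cast (m : ℕ) (c : Fin (2*m+1) → ℝ) (b : ℤ) :
    (((lamZ m c b).re : ℝ) : ℂ) = (lamZ m c b + lamZ m c (-b))/2 := by
  rw [Complex.re_eq_add_conj, lamZ_conj]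

lemma im_cast (m : ℕ) (c : Fin (2*m+1) → ℝ) (b : ℤ) :
    (((lamZ m c b).im : ℝ) : ℂ) = (lamZ m c (-b) - lamZ m c b) * Complex.I / 2 := by
  rw [Complex.im_eq_sub_conj, lamZ_conj]
  have hI := Complex.I_sq
  field_simp
  linear_combination (lamZ m c b - lamZ m c (-b)) * hI

end RSFaux

open RSFaux

theorem real_schur_form_circulant_odd (m : ℕ) (c : Fin (2 * m + 1) → ℝ) :
    let n : ℕ := 2 * m + 1
    let U : Matrix (Fin n) (Fin n) ℝ :=
      Matrix.of fun j i : Fin n =>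
        if (i.1 : ℕ) ≤ m then
          (if (i.1 : ℕ) = 0 then 1 else Real.sqrt 2) *
            (Real.cos (2 * Real.pi * (j.1 : ℝ) * (i.1 : ℝ) / (n : ℝ)) / Real.sqrt n)
        else
          Real.sqrt 2 *
            (Real.sin (2 * Real.pi * (j.1 : ℝ) * ((n - i.1 : ℕ) : ℝ) / (n : ℝ)) / Real.sqrt n)
    let lam : ℕ → ℂ := fun k =>
      ∑ j : Fin n,
        (c j : ℂ) * Complex.exp (-(2 * Real.pi * Complex.I * (k : ℂ) * (j.1 : ℂ) / (n : ℂ)))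
    let Ω : Matrix (Fin n) (Fin n) ℝ :=
      Matrix.of fun i j : Fin n =>
        if i = j then (lam (min i.1 (n - i.1))).re
        else if (i.1 : ℕ) + (j.1 : ℕ) = n then
          (if (i.1 : ℕ) ≤ m then (lam i.1).im else -((lam (n - i.1)).im))
        else 0
    Uᵀ * Matrix.circulant c * U = Ω := by
  intro n U lam Ω
  have hs20 : ((Real.sqrt 2 : ℝ):ℂ) * ((Real.sqrt 2 : ℝ):ℂ) = 2 := by
    rw [← Complex.ofReal_mul, Real.mul_self_sqrt (by norm_num : (0:ℝ) ≤ 2)]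
    norm_num
  have hsn : ((Real.sqrt ((2*m+1:ℕ):ℝ) : ℝ):ℂ) * ((Real.sqrt ((2*m+1:ℕ):ℝ) : ℝ):ℂ)
      = ((2*m+1:ℕ):ℂ) := by
    rw [← Complex.ofReal_mul, Real.mul_self_sqrt (by positivity)]
    norm_cast
  have hsn0 : ((Real.sqrt ((2*m+1:ℕ):ℝ) : ℝ):ℂ) ≠ 0 := by
    rw [Complex.ofReal_ne_zero]
    refine (Real.sqrt_ne_zero ?_).2 ?_ <;> positivity
  ext i j
  have hiv : i.1 < 2*m+1 := i.2
  have hjv : j.1 < 2*m+1 := j.2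
  simp only [U, Ω, lam, n, Matrix.mul_apply, Matrix.transpose_apply, Matrix.circulant_apply,
    Matrix.of_apply]
  rw [← Complex.ofReal_inj]
  by_cases hi : (i.1 : ℕ) ≤ m <;> by_cases hj : (j.1 : ℕ) ≤ m <;>
    simp only [hi, hj, if_true, if_false, ite_true, ite_false]
  · -- cos / cos
    refine Eq.trans (carrier m c _ _ _ _ ((i.1:ℕ):ℤ) ((j.1:ℕ):ℤ) _ _
      (fun p => hwcos m i.1 p) (fun q => hwcos m j.1 q)) ?_
    by_cases hij : i = j
    · subst hij
      rw [if_pos rfl]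
      rw [show i.1 ⊓ (2*m+1 - i.1) = i.1 from by omega]
      rw [lam_eq m c i.1, re_cast]
      by_cases hi0 : i.1 = 0
      · simp only [hi0, Nat.cast_zero, neg_zero, add_zero, ite_true, if_pos]
        rw [sig_zero, ← hsn]
        generalize ((Real.sqrt ((2*m+1:ℕ):ℝ) : ℝ):ℂ) = S at hsn0 ⊢
        field_simp
        rw [Complex.ofReal_one]
        ring
      · simp only [hi0, ite_false, if_neg]
        rw [sig_eq_zero m (((i.1:ℕ):ℤ) + ((i.1:ℕ):ℤ)) (by omega) (by rw [abs_lt]; omega)]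
        rw [show (((i.1:ℕ):ℤ) + -((i.1:ℕ):ℤ)) = 0 from by ring]
        rw [show ((-((i.1:ℕ):ℤ)) + ((i.1:ℕ):ℤ)) = 0 from by ring]
        rw [sig_eq_zero m ((-((i.1:ℕ):ℤ)) + -((i.1:ℕ):ℤ)) (by omega) (by rw [abs_lt]; omega)]
        rw [sig_zero, ← hsn]
        generalize lamZ m c ((i.1:ℕ):ℤ) = L1
        generalize lamZ m c (-((i.1:ℕ):ℤ)) = L2
        generalize ((Real.sqrt ((2*m+1:ℕ):ℝ) : ℝ):ℂ) = S at hsn0 ⊢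
        generalize ((Real.sqrt 2 : ℝ):ℂ) = T at hs20 ⊢
        field_simp
        linear_combination (S*S*(L1 + L2)) * hs20
    · have hvij : i.1 ≠ j.1 := fun h => hij (Fin.val_injective h)
      rw [if_neg hij, if_neg (by omega : ¬ ((i.1:ℕ) + (j.1:ℕ) = 2*m+1))]
      rw [sig_eq_zero m (((i.1:ℕ):ℤ) + ((j.1:ℕ):ℤ)) (by omega) (by rw [abs_lt]; omega)]
      rw [sig_eq_zero m (((i.1:ℕ):ℤ) + -((j.1:ℕ):ℤ)) (by omega) (by rw [abs_lt]; omega)]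
      rw [sig_eq_zero m ((-((i.1:ℕ):ℤ)) + ((j.1:ℕ):ℤ)) (by omega) (by rw [abs_lt]; omega)]
      rw [sig_eq_zero m ((-((i.1:ℕ):ℤ)) + -((j.1:ℕ):ℤ)) (by omega) (by rw [abs_lt]; omega)]
      push_cast
      ring
  · -- cos / sin
    refine Eq.trans (carrier m c _ _ _ _ ((i.1:ℕ):ℤ) ((2*m+1 - j.1 : ℕ):ℤ) _ _
      (fun p => hwcos m i.1 p) (fun q => hwsin m (2*m+1 - j.1) q)) ?_
    have hij : i ≠ j := by intro h; subst h; exact hj hi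
    rw [if_neg hij]
    by_cases hco : (i.1:ℕ) + (j.1:ℕ) = 2*m+1
    · rw [if_pos hco]
      rw [lam_eq m c i.1, im_cast]
      rw [if_neg (show ¬ (i.1:ℕ) = 0 from by omega)]
      rw [show ((i.1:ℕ):ℤ) = ((2*m+1 - j.1 : ℕ):ℤ) from by omega]
      rw [sig_eq_zero m (((2*m+1 - j.1:ℕ):ℤ) + ((2*m+1 - j.1:ℕ):ℤ)) (by omega) (by rw [abs_lt]; omega)]
      rw [show (((2*m+1 - j.1:ℕ):ℤ) + -((2*m+1 - j.1:ℕ):ℤ)) = 0 from by ring]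
      rw [show ((-((2*m+1 - j.1:ℕ):ℤ)) + ((2*m+1 - j.1:ℕ):ℤ)) = 0 from by ring]
      rw [sig_eq_zero m ((-((2*m+1 - j.1:ℕ):ℤ)) + -((2*m+1 - j.1:ℕ):ℤ)) (by omega) (by rw [abs_lt]; omega)]
      rw [sig_zero, ← hsn]
      generalize lamZ m c ((2*m+1 - j.1:ℕ):ℤ) = L1
      generalize lamZ m c (-((2*m+1 - j.1:ℕ):ℤ)) = L2
      generalize ((Real.sqrt ((2*m+1:ℕ):ℝ) : ℝ):ℂ) = S at hsn0 ⊢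
      generalize ((Real.sqrt 2 : ℝ):ℂ) = T at hs20 ⊢
      field_simp
      linear_combination (S*S*(L2 - L1)) * hs20
    · rw [if_neg hco]
      rw [sig_eq_zero m (((i.1:ℕ):ℤ) + ((2*m+1 - j.1:ℕ):ℤ)) (by omega) (by rw [abs_lt]; omega)]
      rw [sig_eq_zero m (((i.1:ℕ):ℤ) + -((2*m+1 - j.1:ℕ):ℤ)) (by omega) (by rw [abs_lt]; omega)]
      rw [sig_eq_zero m ((-((i.1:ℕ):ℤ)) + ((2*m+1 - j.1:ℕ):ℤ)) (by omega) (by rw [abs_lt]; omega)]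
      rw [sig_eq_zero m ((-((i.1:ℕ):ℤ)) + -((2*m+1 - j.1:ℕ):ℤ)) (by omega) (by rw [abs_lt]; omega)]
      push_cast
      ring
  · -- sin / cos
    refine Eq.trans (carrier m c _ _ _ _ ((2*m+1 - i.1 : ℕ):ℤ) ((j.1:ℕ):ℤ) _ _
      (fun p => hwsin m (2*m+1 - i.1) p) (fun q => hwcos m j.1 q)) ?_
    have hij : i ≠ j := by intro h; subst h; exact hi hj
    rw [if_neg hij]
    by_cases hco : (i.1:ℕ) + (j.1:ℕ) = 2*m+1
    · rw [if_pos hco]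
      rw [Complex.ofReal_neg]
      rw [lam_eq m c (2*m+1 - i.1), im_cast]
      rw [if_neg (show ¬ (j.1:ℕ) = 0 from by omega)]
      rw [show ((j.1:ℕ):ℤ) = ((2*m+1 - i.1 : ℕ):ℤ) from by omega]
      rw [sig_eq_zero m (((2*m+1 - i.1:ℕ):ℤ) + ((2*m+1 - i.1:ℕ):ℤ)) (by omega) (by rw [abs_lt]; omega)]
      rw [show (((2*m+1 - i.1:ℕ):ℤ) + -((2*m+1 - i.1:ℕ):ℤ)) = 0 from by ring]
      rw [show ((-((2*m+1 - i.1:ℕ):ℤ)) + ((2*m+1 - i.1:ℕ):ℤ)) = 0 from by ring]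
      rw [sig_eq_zero m ((-((2*m+1 - i.1:ℕ):ℤ)) + -((2*m+1 - i.1:ℕ):ℤ)) (by omega) (by rw [abs_lt]; omega)]
      rw [sig_zero, ← hsn]
      generalize lamZ m c ((2*m+1 - i.1:ℕ):ℤ) = L1
      generalize lamZ m c (-((2*m+1 - i.1:ℕ):ℤ)) = L2
      generalize ((Real.sqrt ((2*m+1:ℕ):ℝ) : ℝ):ℂ) = S at hsn0 ⊢
      generalize ((Real.sqrt 2 : ℝ):ℂ) = T at hs20 ⊢
      field_simp
      linear_combination (S*S*(L1 - L2)) * hs20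
    · rw [if_neg hco]
      rw [sig_eq_zero m (((2*m+1 - i.1:ℕ):ℤ) + ((j.1:ℕ):ℤ)) (by omega) (by rw [abs_lt]; omega)]
      rw [sig_eq_zero m (((2*m+1 - i.1:ℕ):ℤ) + -((j.1:ℕ):ℤ)) (by omega) (by rw [abs_lt]; omega)]
      rw [sig_eq_zero m ((-((2*m+1 - i.1:ℕ):ℤ)) + ((j.1:ℕ):ℤ)) (by omega) (by rw [abs_lt]; omega)]
      rw [sig_eq_zero m ((-((2*m+1 - i.1:ℕ):ℤ)) + -((j.1:ℕ):ℤ)) (by omega) (by rw [abs_lt]; omega)]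
      push_cast
      ring
  · -- sin / sin
    refine Eq.trans (carrier m c _ _ _ _ ((2*m+1 - i.1 : ℕ):ℤ) ((2*m+1 - j.1 : ℕ):ℤ) _ _
      (fun p => hwsin m (2*m+1 - i.1) p) (fun q => hwsin m (2*m+1 - j.1) q)) ?_
    by_cases hij : i = j
    · subst hij
      rw [if_pos rfl]
      rw [show i.1 ⊓ (2*m+1 - i.1) = 2*m+1 - i.1 from by omega]
      rw [lam_eq m c (2*m+1 - i.1), re_cast]
      rw [sig_eq_zero m (((2*m+1 - i.1:ℕ):ℤ) + ((2*m+1 - i.1:ℕ):ℤ)) (by omega) (by rw [abs_lt]; omega)]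
      rw [show (((2*m+1 - i.1:ℕ):ℤ) + -((2*m+1 - i.1:ℕ):ℤ)) = 0 from by ring]
      rw [show ((-((2*m+1 - i.1:ℕ):ℤ)) + ((2*m+1 - i.1:ℕ):ℤ)) = 0 from by ring]
      rw [sig_eq_zero m ((-((2*m+1 - i.1:ℕ):ℤ)) + -((2*m+1 - i.1:ℕ):ℤ)) (by omega) (by rw [abs_lt]; omega)]
      rw [sig_zero, ← hsn]
      generalize lamZ m c ((2*m+1 - i.1:ℕ):ℤ) = L1
      generalize lamZ m c (-((2*m+1 - i.1:ℕ):ℤ)) = L2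
      generalize ((Real.sqrt ((2*m+1:ℕ):ℝ) : ℝ):ℂ) = S at hsn0 ⊢
      generalize ((Real.sqrt 2 : ℝ):ℂ) = T at hs20 ⊢
      field_simp
      linear_combination (S*S*(L1+L2)) * hs20 + (-(S*S*(T*T))*(L1+L2)) * Complex.I_sq
    · have hvij : i.1 ≠ j.1 := fun h => hij (Fin.val_injective h)
      rw [if_neg hij, if_neg (by omega : ¬ ((i.1:ℕ) + (j.1:ℕ) = 2*m+1))]
      rw [sig_eq_zero m (((2*m+1 - i.1:ℕ):ℤ) + ((2*m+1 - j.1:ℕ):ℤ)) (by omega) (by rw [abs_lt]; omega)]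
      rw [sig_eq_zero m (((2*m+1 - i.1:ℕ):ℤ) + -((2*m+1 - j.1:ℕ):ℤ)) (by omega) (by rw [abs_lt]; omega)]
      rw [sig_eq_zero m ((-((2*m+1 - i.1:ℕ):ℤ)) + ((2*m+1 - j.1:ℕ):ℤ)) (by omega) (by rw [abs_lt]; omega)]
      rw [sig_eq_zero m ((-((2*m+1 - i.1:ℕ):ℤ)) + -((2*m+1 - j.1:ℕ):ℤ)) (by omega) (by rw [abs_lt]; omega)]
      push_cast
      ring
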